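/- For every real z > 0, ∫₀^∞ K₁( 2z cosh(t) ) dt = (1/2) K_{1/2}(z)², and this common value equals (π/(4z)) e^{−2z}. -/

import Mathlib

open MeasureTheory Real

/-- Modified Bessel function of the second kind, integral representation. -/
noncomputable def besselK (ν z : ℝ) : ℝ :=
  ∫ t in Set.Ioi (0:ℝ), Real.exp (-z * Real.cosh t) * Real.cosh (ν * t)

open Set


noncomputable def polarF (z : ℝ) : ℝ × ℝ → ℝ :=
  fun x => (1 + x.1^2)⁻¹ * Real.exp (-(2*z) * Real.sqrt (1 + x.1^2 + x.2^2))

lemma integrable_exp_neg_abs {c : ℝ} (hc : 0 < c) :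
    Integrable (fun x : ℝ => Real.exp (-c * |x|)) := by
  have hIoi : IntegrableOn (fun x : ℝ => Real.exp (-c * |x|)) (Set.Ioi 0) :=
    (exp_neg_integrableOn_Ioi 0 hc).congr_fun
      (fun x hx => by rw [abs_of_pos (Set.mem_Ioi.mp hx)]) measurableSet_Ioi
  have hIci : IntegrableOn (fun x : ℝ => Real.exp (-c * |x|)) (Set.Ici 0) :=
    (integrableOn_Ici_iff_integrableOn_Ioi).mpr hIoi
  have hIic : IntegrableOn (fun x : ℝ => Real.exp (-c * |x|)) (Set.Iic 0) := by
    have A : MeasurableEmbedding (fun x : ℝ => -x) :=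
      (Homeomorph.neg ℝ).isClosedEmbedding.measurableEmbedding
    rw [IntegrableOn, ← Measure.map_neg_eq_self (volume : Measure ℝ), A.restrict_map,
      A.integrable_map_iff]
    have hpre : ((fun x : ℝ => -x) ⁻¹' Set.Iic 0) = Set.Ici 0 := by ext x; simp
    rw [hpre]
    have : ((fun x : ℝ => Real.exp (-c * |x|)) ∘ (fun x : ℝ => -x))
        = fun x : ℝ => Real.exp (-c * |x|) := by
      funext x; simp [Function.comp, abs_neg]
    rw [this]
    exact hIci
  have := hIic.union hIoi
  rwa [Set.Iic_union_Ioi, integrableOn_univ] at this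

lemma polarF_continuous (z : ℝ) : Continuous (polarF z) := by
  unfold polarF
  have c1 : Continuous fun x : ℝ × ℝ => 1 + x.1^2 :=
    continuous_const.add ((continuous_fst).pow 2)
  have c2 : Continuous fun x : ℝ × ℝ => 1 + x.1^2 + x.2^2 :=
    c1.add ((continuous_snd).pow 2)
  exact (c1.inv₀ fun x => by positivity).mul
    (Real.continuous_exp.comp (continuous_const.mul (Real.continuous_sqrt.comp c2)))

lemma polarF_nonneg (z : ℝ) (x : ℝ × ℝ) : 0 ≤ polarF z x := by
  unfold polarF; positivity

lemma polarF_integrable {z : ℝ} (hz : 0 < z) :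
    Integrable (polarF z) (volume : Measure (ℝ × ℝ)) := by
  have hprod := (integrable_exp_neg_abs hz).mul_prod (integrable_exp_neg_abs hz)
  rw [← Measure.volume_eq_prod ℝ ℝ] at hprod
  refine hprod.mono' ((polarF_continuous z).aestronglyMeasurable) ?_
  refine Filter.Eventually.of_forall fun x => ?_
  have hq := x.1; have hp := x.2
  rw [Real.norm_eq_abs, abs_of_nonneg (polarF_nonneg z x)]
  unfold polarF
  have h1 : (1 + x.1^2)⁻¹ ≤ 1 := by
    rw [inv_le_one_iff₀]; right; nlinarith [sq_nonneg x.1]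
  have hs1 : |x.1| ≤ Real.sqrt (1 + x.1^2 + x.2^2) := by
    rw [← Real.sqrt_sq_eq_abs]
    exact Real.sqrt_le_sqrt (by nlinarith [sq_nonneg x.2])
  have hs2 : |x.2| ≤ Real.sqrt (1 + x.1^2 + x.2^2) := by
    rw [← Real.sqrt_sq_eq_abs]
    exact Real.sqrt_le_sqrt (by nlinarith [sq_nonneg x.1])
  have hexp : Real.exp (-(2*z) * Real.sqrt (1 + x.1^2 + x.2^2))
      ≤ Real.exp (-z * |x.1|) * Real.exp (-z * |x.2|) := by
    rw [← Real.exp_add]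
    apply Real.exp_le_exp.mpr
    nlinarith [hs1, hs2, hz.le]
  calc (1 + x.1^2)⁻¹ * Real.exp (-(2*z) * Real.sqrt (1 + x.1^2 + x.2^2))
      ≤ 1 * (Real.exp (-z * |x.1|) * Real.exp (-z * |x.2|)) := by
        apply mul_le_mul h1 hexp (by positivity) (by norm_num)
    _ = Real.exp (-z * |x.1|) * Real.exp (-z * |x.2|) := one_mul _

lemma polar_integrand_integrable {z : ℝ} (hz : 0 < z) :
    IntegrableOn (fun p : ℝ × ℝ => p.1 • polarF z (polarCoord.symm p))
      (Set.Ioi 0 ×ˢ Set.Ioo (-π) π) := by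
  have hr : IntegrableOn (fun r : ℝ => r * Real.exp (-(2*z) * r)) (Set.Ioi 0) := by
    have := integrableOn_rpow_mul_exp_neg_mul_rpow (s := 1) (p := 1) (b := 2*z)
      (by norm_num) (by norm_num) (by linarith)
    simpa [Real.rpow_one] using this
  have hθ : IntegrableOn (fun _ : ℝ => (1:ℝ)) (Set.Ioo (-π) π) :=
    (integrableOn_const_iff).mpr (Or.inr measure_Ioo_lt_top)
  have hbound : IntegrableOn (fun p : ℝ × ℝ => p.1 * Real.exp (-(2*z) * p.1) * 1)
      (Set.Ioi 0 ×ˢ Set.Ioo (-π) π) := by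
    rw [IntegrableOn, Measure.volume_eq_prod ℝ ℝ, ← Measure.prod_restrict]
    exact hr.mul_prod hθ
  have hmeas : AEStronglyMeasurable (fun p : ℝ × ℝ => p.1 • polarF z (polarCoord.symm p))
      (volume.restrict (Set.Ioi 0 ×ˢ Set.Ioo (-π) π)) := by
    have hcont : Continuous (fun p : ℝ × ℝ => p.1 • polarF z (polarCoord.symm p)) := by
      have hsymm : Continuous (polarCoord.symm : ℝ × ℝ → ℝ × ℝ) := by
        have : (polarCoord.symm : ℝ × ℝ → ℝ × ℝ)
            = fun p : ℝ × ℝ => (p.1 * Real.cos p.2, p.1 * Real.sin p.2) := by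
          funext p; exact polarCoord_symm_apply p
        rw [this]
        exact (continuous_fst.mul (Real.continuous_cos.comp continuous_snd)).prodMk
          (continuous_fst.mul (Real.continuous_sin.comp continuous_snd))
      exact continuous_fst.smul ((polarF_continuous z).comp hsymm)
    exact hcont.aestronglyMeasurable
  refine hbound.mono' hmeas ?_
  rw [ae_restrict_iff' ((measurableSet_Ioi).prod measurableSet_Ioo)]
  refine Filter.Eventually.of_forall fun x hx => ?_
  obtain ⟨hx1, hx2⟩ := hx
  have hr0 : (0:ℝ) < x.1 := hx1
  rw [Real.norm_eq_abs, smul_eq_mul, abs_of_nonneg (mul_nonneg hr0.le (polarF_nonneg z _))]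
  rw [mul_one]
  apply mul_le_mul_of_nonneg_left _ hr0.le
  rw [polarCoord_symm_apply]
  unfold polarF
  simp only
  have h1 : 1 + (x.1 * Real.cos x.2)^2 + (x.1 * Real.sin x.2)^2 = 1 + x.1^2 := by
    have := Real.sin_sq_add_cos_sq x.2; nlinarith
  rw [h1]
  have h2 : (1 + (x.1 * Real.cos x.2)^2)⁻¹ ≤ 1 := by
    rw [inv_le_one_iff₀]; right; nlinarith [sq_nonneg (x.1 * Real.cos x.2)]
  have h3 : Real.exp (-(2*z) * Real.sqrt (1 + x.1^2)) ≤ Real.exp (-(2*z) * x.1) := by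
    apply Real.exp_le_exp.mpr
    have : x.1 ≤ Real.sqrt (1 + x.1^2) := by
      have h := Real.sqrt_le_sqrt (show x.1^2 ≤ 1 + x.1^2 by nlinarith)
      rwa [Real.sqrt_sq hr0.le] at h
    nlinarith
  calc (1 + (x.1 * Real.cos x.2)^2)⁻¹ * Real.exp (-(2*z) * Real.sqrt (1 + x.1^2))
      ≤ 1 * Real.exp (-(2*z) * x.1) := by
        apply mul_le_mul h2 h3 (by positivity) (by norm_num)
    _ = Real.exp (-(2*z) * x.1) := one_mul _


lemma arctan_image_Ioi : Real.arctan '' Set.Ioi 0 = Set.Ioo 0 (π/2) := by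
  ext y
  constructor
  · rintro ⟨x, hx, rfl⟩
    refine ⟨?_, Real.arctan_lt_pi_div_two x⟩
    simpa [Real.arctan_zero] using Real.arctan_strictMono hx
  · rintro ⟨h1, h2⟩
    refine ⟨Real.tan y, ?_, Real.arctan_tan (by linarith [Real.pi_pos]) h2⟩
    exact Real.tan_pos_of_pos_of_lt_pi_div_two h1 h2

lemma angular {a : ℝ} (ha : 0 ≤ a) :
    (∫ θ in Set.Ioo (-π) π, (1 + a * Real.cos θ ^ 2)⁻¹)
      = 2 * π / Real.sqrt (1 + a) := by
  set f : ℝ → ℝ := fun θ => (1 + a * Real.cos θ ^ 2)⁻¹ with hf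
  set g : ℝ → ℝ := fun θ => (1 + a * Real.sin θ ^ 2)⁻¹ with hg
  have hposf : ∀ θ : ℝ, (0:ℝ) < 1 + a * Real.cos θ ^ 2 := fun θ =>
    add_pos_of_pos_of_nonneg one_pos (mul_nonneg ha (sq_nonneg _))
  have hposg : ∀ θ : ℝ, (0:ℝ) < 1 + a * Real.sin θ ^ 2 := fun θ =>
    add_pos_of_pos_of_nonneg one_pos (mul_nonneg ha (sq_nonneg _))
  have hcontf : Continuous f :=
    (continuous_const.add (continuous_const.mul (Real.continuous_cos.pow 2))).inv₀
      fun θ => (hposf θ).ne'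
  have hcontg : Continuous g :=
    (continuous_const.add (continuous_const.mul (Real.continuous_sin.pow 2))).inv₀
      fun θ => (hposg θ).ne'
  have h0 : (∫ θ in Set.Ioo (-π) π, f θ) = ∫ θ in (-π)..π, f θ := by
    rw [intervalIntegral.integral_of_le (by linarith [Real.pi_pos]),
      integral_Ioc_eq_integral_Ioo]
  have h1 : (∫ θ in (-π)..(0:ℝ), f θ) = ∫ θ in (0:ℝ)..π, f θ := by
    have hc := intervalIntegral.integral_comp_sub_right (a := 0) (b := π) (f := f) π
    simp only [zero_sub, sub_self] at hc
    rw [← hc]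
    refine intervalIntegral.integral_congr fun x _ => ?_
    simp only [hf, Real.cos_sub_pi, neg_sq]
  have h2 : (∫ θ in (-π)..π, f θ) = 2 * ∫ θ in (0:ℝ)..π, f θ := by
    rw [← intervalIntegral.integral_add_adjacent_intervals (b := (0:ℝ))
      (hcontf.intervalIntegrable _ _) (hcontf.intervalIntegrable _ _), h1]
    ring
  have h3 : (∫ θ in (0:ℝ)..π, f θ) = ∫ θ in (-(π/2))..(π/2), g θ := by
    have hc := intervalIntegral.integral_comp_add_right (a := -(π/2)) (b := π/2) (f := f) (π/2)
    have : -(π/2) + π/2 = (0:ℝ) := by ring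
    rw [this, (by ring : π/2 + π/2 = π)] at hc
    rw [← hc]
    refine intervalIntegral.integral_congr fun x _ => ?_
    simp only [hf, hg, Real.cos_add_pi_div_two, neg_sq]
  have h4 : (∫ θ in (-(π/2))..(0:ℝ), g θ) = ∫ θ in (0:ℝ)..(π/2), g θ := by
    have hc := intervalIntegral.integral_comp_neg (a := (0:ℝ)) (b := π/2) (f := g)
    simp only [neg_zero] at hc
    rw [← hc]
    refine intervalIntegral.integral_congr fun x _ => ?_
    simp only [hg, Real.sin_neg, neg_sq]
  have h5 : (∫ θ in (-(π/2))..(π/2), g θ) = 2 * ∫ θ in (0:ℝ)..(π/2), g θ := by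
    rw [← intervalIntegral.integral_add_adjacent_intervals (b := (0:ℝ))
      (hcontg.intervalIntegrable _ _) (hcontg.intervalIntegrable _ _), h4]
    ring
  have h6 : (∫ θ in (0:ℝ)..(π/2), g θ) = ∫ θ in Set.Ioo 0 (π/2), g θ := by
    rw [intervalIntegral.integral_of_le (by linarith [Real.pi_pos]),
      integral_Ioc_eq_integral_Ioo]
  have h7 : (∫ θ in Set.Ioo 0 (π/2), g θ) = ∫ x in Set.Ioi (0:ℝ), (1 + (1+a) * x^2)⁻¹ := by
    have hd : ∀ x ∈ Set.Ioi (0:ℝ), HasDerivWithinAt Real.arctan ((1 + x^2)⁻¹) (Set.Ioi 0) x :=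
      fun x _ => (Real.hasDerivAt_arctan' x).hasDerivWithinAt
    have key := integral_image_eq_integral_abs_deriv_smul measurableSet_Ioi hd
      (Real.arctan_injective.injOn) g
    rw [arctan_image_Ioi] at key
    rw [key]
    refine setIntegral_congr_fun measurableSet_Ioi fun x _ => ?_
    have hx2 : (0:ℝ) < 1 + x^2 := by positivity
    have hs : Real.sin (Real.arctan x) ^ 2 = x^2 / (1+x^2) := by
      rw [Real.sin_arctan]
      rw [div_pow, Real.sq_sqrt hx2.le]
    simp only [hg, smul_eq_mul, hs, abs_of_pos (inv_pos.mpr hx2)]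
    rw [← mul_inv]
    congr 1
    field_simp
    ring
  have h8 : (∫ x in Set.Ioi (0:ℝ), (1 + (1+a) * x^2)⁻¹) = (π/2) / Real.sqrt (1+a) := by
    have ha1 : (0:ℝ) < 1 + a := by linarith
    have hb : (0:ℝ) < Real.sqrt (1+a) := Real.sqrt_pos.mpr ha1
    have hc := integral_comp_mul_left_Ioi (g := fun y => (1 + y^2)⁻¹) 0 hb
    simp only [mul_zero] at hc
    have : ∀ x : ℝ, (1 + (Real.sqrt (1+a) * x)^2)⁻¹ = (1 + (1+a) * x^2)⁻¹ := by
      intro x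
      rw [mul_pow, Real.sq_sqrt ha1.le]
    simp only [this] at hc
    rw [hc, integral_Ioi_inv_one_add_sq, Real.arctan_zero, sub_zero, smul_eq_mul]
    ring
  rw [h0, h2, h3, h5, h6, h7, h8]
  have hb : (0:ℝ) < Real.sqrt (1+a) := Real.sqrt_pos.mpr (by linarith)
  field_simp


lemma sinh_image_Ioi : Real.sinh '' Set.Ioi 0 = Set.Ioi (0:ℝ) := by
  ext x
  constructor
  · rintro ⟨t, ht, rfl⟩
    exact Real.sinh_pos_iff.mpr ht
  · intro hx
    exact ⟨Real.arsinh x, Real.arsinh_pos_iff.mpr hx, Real.sinh_arsinh x⟩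

/-- inner substitution: for c ≥ 1 (c = cosh t) -/
lemma inner_subst {z c : ℝ} (hz : 0 < z) (hc : 0 < c) :
    (∫ s in Set.Ioi (0:ℝ), Real.exp (-(2*z*c) * Real.cosh s) * Real.cosh s)
      = c⁻¹ * ∫ p in Set.Ioi (0:ℝ), Real.exp (-(2*z) * Real.sqrt (c^2 + p^2)) := by
  have himg : (fun s => Real.sinh s * c) '' Set.Ioi 0 = Set.Ioi (0:ℝ) := by
    ext x
    constructor
    · rintro ⟨t, ht, rfl⟩
      exact mul_pos (Real.sinh_pos_iff.mpr ht) hc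
    · intro hx
      refine ⟨Real.arsinh (x / c), Real.arsinh_pos_iff.mpr (div_pos hx hc), ?_⟩
      show Real.sinh (Real.arsinh (x / c)) * c = x
      rw [Real.sinh_arsinh, div_mul_cancel₀ _ hc.ne']
  have hd : ∀ s ∈ Set.Ioi (0:ℝ), HasDerivWithinAt (fun s => Real.sinh s * c)
      (Real.cosh s * c) (Set.Ioi 0) s := fun s _ =>
    ((Real.hasDerivAt_sinh s).mul_const c).hasDerivWithinAt
  have hinj : Set.InjOn (fun s => Real.sinh s * c) (Set.Ioi 0) := fun p _ q _ h => by
    simp only [mul_eq_mul_right_iff, hc.ne'] at h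
    exact Real.sinh_injective (by tauto)
  have key := integral_image_eq_integral_abs_deriv_smul measurableSet_Ioi hd hinj
    (fun p => Real.exp (-(2*z) * Real.sqrt (c^2 + p^2)))
  rw [himg] at key
  rw [key, ← integral_const_mul]
  refine setIntegral_congr_fun measurableSet_Ioi fun s hs => ?_
  have hcosh : (0:ℝ) < Real.cosh s := Real.cosh_pos s
  have hsq : c^2 + (Real.sinh s * c)^2 = (c * Real.cosh s)^2 := by
    have := Real.cosh_sq s
    nlinarith [this]
  rw [smul_eq_mul, hsq, Real.sqrt_sq (by positivity), abs_of_pos (by positivity)]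
  field_simp

lemma radial {z : ℝ} (hz : 0 < z) :
    (∫ r in Set.Ioi (0:ℝ), r * Real.exp (-(2*z) * Real.sqrt (1 + r^2)) * (2*π / Real.sqrt (1+r^2)))
      = 2 * π * (Real.exp (-(2*z)) / (2*z)) := by
  have himg : (fun r : ℝ => Real.sqrt (1 + r^2)) '' Set.Ioi 0 = Set.Ioi (1:ℝ) := by
    ext x
    constructor
    · rintro ⟨r, hr, rfl⟩
      have : (1:ℝ) < 1 + r^2 := by nlinarith [Set.mem_Ioi.mp hr]
      have := Real.sqrt_lt_sqrt (by norm_num) this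
      simpa using this
    · intro hx
      have hx1 : (1:ℝ) < x := hx
      refine ⟨Real.sqrt (x^2 - 1), Real.sqrt_pos.mpr (by nlinarith), ?_⟩
      show Real.sqrt (1 + Real.sqrt (x^2-1) ^ 2) = x
      rw [Real.sq_sqrt (by nlinarith : (0:ℝ) ≤ x^2 - 1)]
      rw [(by ring : 1 + (x^2 - 1) = x^2), Real.sqrt_sq (by linarith)]
  have hd : ∀ r ∈ Set.Ioi (0:ℝ), HasDerivWithinAt (fun r : ℝ => Real.sqrt (1 + r^2))
      (r / Real.sqrt (1 + r^2)) (Set.Ioi 0) r := by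
    intro r _
    have h1 : (0:ℝ) < 1 + r^2 := by positivity
    have h := (Real.hasDerivAt_sqrt h1.ne').comp r
      ((hasDerivAt_const r (1:ℝ)).add ((hasDerivAt_pow 2 r)))
    refine h.hasDerivWithinAt.congr_deriv ?_
    have hs : (0:ℝ) < Real.sqrt (1 + r^2) := Real.sqrt_pos.mpr h1
    field_simp
    ring
  have hinj : Set.InjOn (fun r : ℝ => Real.sqrt (1 + r^2)) (Set.Ioi 0) := by
    intro p hp q hq h
    have hp' := Set.mem_Ioi.mp hp
    have hq' := Set.mem_Ioi.mp hq
    have h' : Real.sqrt (1+p^2) = Real.sqrt (1+q^2) := h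
    have h1 : (0:ℝ) ≤ 1 + p^2 := by positivity
    have h2 : (0:ℝ) ≤ 1 + q^2 := by positivity
    have h3 : 1 + p^2 = 1 + q^2 := by rw [← Real.sq_sqrt h1, ← Real.sq_sqrt h2, h']
    nlinarith
  have key := integral_image_eq_integral_abs_deriv_smul measurableSet_Ioi hd hinj
    (fun w => 2 * π * Real.exp (-(2*z) * w))
  rw [himg] at key
  have hval : (∫ w in Set.Ioi (1:ℝ), 2 * π * Real.exp (-(2*z) * w))
      = 2 * π * (Real.exp (-(2*z)) / (2*z)) := by
    rw [integral_const_mul]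
    have hc := integral_comp_mul_left_Ioi (g := fun w => Real.exp (-w)) 1 (by linarith : (0:ℝ) < 2*z)
    simp only [mul_one] at hc
    have : ∀ w : ℝ, Real.exp (-(2*z*w)) = Real.exp (-(2*z)*w) := fun w => by ring_nf
    simp only [this] at hc
    rw [hc, integral_exp_neg_Ioi, smul_eq_mul]
    ring
  rw [← hval, key]
  refine setIntegral_congr_fun measurableSet_Ioi fun r hr => ?_
  have hr' := Set.mem_Ioi.mp hr
  have hs : (0:ℝ) < Real.sqrt (1 + r^2) := Real.sqrt_pos.mpr (by positivity)
  rw [smul_eq_mul, abs_of_pos (by positivity)]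
  field_simp


lemma outer_subst {z : ℝ} (hz : 0 < z) :
    (∫ t in Set.Ioi (0:ℝ), (Real.cosh t)⁻¹
        * ∫ p in Set.Ioi (0:ℝ), Real.exp (-(2*z) * Real.sqrt (Real.cosh t^2 + p^2)))
      = ∫ q in Set.Ioi (0:ℝ), (1 + q^2)⁻¹
        * ∫ p in Set.Ioi (0:ℝ), Real.exp (-(2*z) * Real.sqrt (1 + q^2 + p^2)) := by
  have himg : Real.sinh '' Set.Ioi 0 = Set.Ioi (0:ℝ) := by
    ext x
    constructor
    · rintro ⟨t, ht, rfl⟩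
      exact Real.sinh_pos_iff.mpr ht
    · intro hx
      exact ⟨Real.arsinh x, Real.arsinh_pos_iff.mpr hx, Real.sinh_arsinh x⟩
  have hd : ∀ t ∈ Set.Ioi (0:ℝ), HasDerivWithinAt Real.sinh (Real.cosh t) (Set.Ioi 0) t :=
    fun t _ => (Real.hasDerivAt_sinh t).hasDerivWithinAt
  have key := integral_image_eq_integral_abs_deriv_smul measurableSet_Ioi hd
    (Real.sinh_injective.injOn)
    (fun q => (1 + q^2)⁻¹ * ∫ p in Set.Ioi (0:ℝ), Real.exp (-(2*z) * Real.sqrt (1 + q^2 + p^2)))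
  rw [himg] at key
  rw [key]
  refine setIntegral_congr_fun measurableSet_Ioi fun t _ => ?_
  have hc : (0:ℝ) < Real.cosh t := Real.cosh_pos t
  have hid : 1 + Real.sinh t^2 = Real.cosh t^2 := by
    have := Real.cosh_sq t; linarith
  rw [smul_eq_mul, hid, abs_of_pos hc]
  rw [pow_two]
  field_simp

lemma F_plane {z : ℝ} (hz : 0 < z) :
    (∫ x : ℝ × ℝ, polarF z x)
      = 4 * ∫ q in Set.Ioi (0:ℝ), (1 + q^2)⁻¹
          * ∫ p in Set.Ioi (0:ℝ), Real.exp (-(2*z) * Real.sqrt (1 + q^2 + p^2)) := by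
  have hint := polarF_integrable hz
  rw [Measure.volume_eq_prod ℝ ℝ] at hint ⊢
  rw [integral_prod _ hint]
  have inner_even : ∀ q : ℝ, (∫ p : ℝ, polarF z (q, p))
      = 2 * ∫ p in Set.Ioi (0:ℝ), polarF z (q, p) := by
    intro q
    rw [show (∫ p : ℝ, polarF z (q, p)) = ∫ p : ℝ, polarF z (q, |p|) from
      integral_congr_ae (Filter.Eventually.of_forall fun p => by simp [polarF, sq_abs])]
    exact integral_comp_abs (f := fun p => polarF z (q, p))
  simp_rw [inner_even]
  rw [show (∫ q : ℝ, 2 * ∫ p in Set.Ioi (0:ℝ), polarF z (q, p))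
      = ∫ q : ℝ, 2 * ∫ p in Set.Ioi (0:ℝ), polarF z (|q|, p) from
    integral_congr_ae (Filter.Eventually.of_forall fun q =>
      congrArg (fun y => 2 * y)
        (setIntegral_congr_fun measurableSet_Ioi fun p _ =>
          show polarF z (q, p) = polarF z (|q|, p) by simp [polarF, sq_abs]))]
  rw [integral_comp_abs (f := fun q => 2 * ∫ p in Set.Ioi (0:ℝ), polarF z (q, p))]
  rw [integral_const_mul]
  have : ∀ q : ℝ, (∫ p in Set.Ioi (0:ℝ), polarF z (q, p))
      = (1 + q^2)⁻¹ * ∫ p in Set.Ioi (0:ℝ), Real.exp (-(2*z) * Real.sqrt (1 + q^2 + p^2)) := by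
    intro q
    rw [← integral_const_mul]
    rfl
  simp_rw [this]
  ring

lemma F_polar_value {z : ℝ} (hz : 0 < z) :
    (∫ x : ℝ × ℝ, polarF z x) = 2 * π * (Real.exp (-(2*z)) / (2*z)) := by
  rw [← integral_comp_polarCoord_symm (polarF z)]
  have htarget : polarCoord.target = Set.Ioi (0:ℝ) ×ˢ Set.Ioo (-π) π := rfl
  rw [htarget]
  have hker := polar_integrand_integrable hz
  rw [IntegrableOn, Measure.volume_eq_prod ℝ ℝ] at hker
  rw [Measure.volume_eq_prod ℝ ℝ]
  rw [setIntegral_prod _ hker]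
  have hinner : ∀ r ∈ Set.Ioi (0:ℝ),
      (∫ θ in Set.Ioo (-π) π, (r, θ).1 • polarF z (polarCoord.symm (r, θ)))
        = r * Real.exp (-(2*z) * Real.sqrt (1 + r^2)) * (2*π / Real.sqrt (1+r^2)) := by
    intro r hr
    have step : (∫ θ in Set.Ioo (-π) π, (r, θ).1 • polarF z (polarCoord.symm (r, θ)))
        = ∫ θ in Set.Ioo (-π) π,
            (r * Real.exp (-(2*z) * Real.sqrt (1 + r^2))) * (1 + r^2 * Real.cos θ^2)⁻¹ := by
      refine setIntegral_congr_fun measurableSet_Ioo fun θ _ => ?_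
      rw [polarCoord_symm_apply]
      unfold polarF
      simp only [smul_eq_mul]
      have h1 : 1 + (r * Real.cos θ)^2 + (r * Real.sin θ)^2 = 1 + r^2 := by
        have := Real.sin_sq_add_cos_sq θ; nlinarith
      rw [h1]
      have h2 : (r * Real.cos θ)^2 = r^2 * Real.cos θ^2 := by ring
      rw [h2]
      ring
    rw [step, integral_const_mul, angular (sq_nonneg r)]
  rw [setIntegral_congr_fun measurableSet_Ioi hinner]
  exact radial hz



lemma besselK_half {z : ℝ} (hz : 0 < z) :
    besselK (1/2) z = Real.sqrt (π / (2*z)) * Real.exp (-z) := by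
  have himg : (fun t => Real.sinh (t/2)) '' Set.Ioi 0 = Set.Ioi (0:ℝ) := by
    ext x
    constructor
    · rintro ⟨t, ht, rfl⟩
      exact Real.sinh_pos_iff.mpr (by simpa using div_pos ht (two_pos : (0:ℝ) < 2))
    · intro hx
      exact ⟨2 * Real.arsinh x, by simpa using Real.arsinh_pos_iff.mpr hx, by
        simp [mul_comm, mul_div_assoc, Real.sinh_arsinh]⟩
  have hderiv : ∀ t ∈ Set.Ioi (0:ℝ), HasDerivWithinAt (fun t => Real.sinh (t/2))
      (Real.cosh (t/2) * (1/2)) (Set.Ioi 0) t := fun t _ =>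
    ((Real.hasDerivAt_sinh (t/2)).comp (h₂ := Real.sinh) t ((hasDerivAt_id t).div_const 2)).hasDerivWithinAt
  have hinj : Set.InjOn (fun t => Real.sinh (t/2)) (Set.Ioi 0) := fun a _ b _ h => by
    have := Real.sinh_injective h; linarith
  have key := integral_image_eq_integral_abs_deriv_smul measurableSet_Ioi hderiv hinj
    (fun u => Real.exp (-z * (1 + 2*u^2)))
  rw [himg] at key
  have e1 : ∀ t ∈ Set.Ioi (0:ℝ),
      |Real.cosh (t/2) * (1/2)| • Real.exp (-z * (1 + 2 * Real.sinh (t/2)^2))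
        = (1/2) * (Real.exp (-z * Real.cosh t) * Real.cosh (1/2 * t)) := by
    intro t _
    have hc : (0:ℝ) < Real.cosh (t/2) := Real.cosh_pos _
    have h2 : (1:ℝ) + 2 * Real.sinh (t/2)^2 = Real.cosh t := by
      have := Real.cosh_sq (t/2)
      have h4 := Real.cosh_two_mul (t/2)
      rw [(by ring : 2 * (t/2) = t)] at h4
      linarith
    rw [h2, abs_of_pos (by positivity), smul_eq_mul, (by ring : (1:ℝ)/2 * t = t/2)]
    ring
  have key2 : (∫ u in Set.Ioi (0:ℝ), Real.exp (-z * (1 + 2*u^2)))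
      = (1/2) * ∫ t in Set.Ioi (0:ℝ), Real.exp (-z * Real.cosh t) * Real.cosh (1/2 * t) := by
    rw [key, ← integral_const_mul]
    exact setIntegral_congr_fun measurableSet_Ioi (fun t ht => by
      simpa using e1 t ht)
  have gauss : (∫ u in Set.Ioi (0:ℝ), Real.exp (-z * (1 + 2*u^2)))
      = Real.exp (-z) * (Real.sqrt (π / (2*z)) / 2) := by
    have : ∀ u : ℝ, Real.exp (-z * (1 + 2*u^2)) = Real.exp (-z) * Real.exp (-(2*z) * u^2) := by
      intro u; rw [← Real.exp_add]; ring_nf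
    calc (∫ u in Set.Ioi (0:ℝ), Real.exp (-z * (1 + 2*u^2)))
        = ∫ u in Set.Ioi (0:ℝ), Real.exp (-z) * Real.exp (-(2*z) * u^2) := by
          exact setIntegral_congr_fun measurableSet_Ioi (fun u _ => this u)
      _ = Real.exp (-z) * (Real.sqrt (π / (2*z)) / 2) := by
          rw [integral_const_mul, integral_gaussian_Ioi]
  have hb : besselK (1/2) z = ∫ t in Set.Ioi (0:ℝ), Real.exp (-z * Real.cosh t) * Real.cosh (1/2 * t) := rfl
  rw [gauss] at key2
  rw [hb]
  have := key2.symm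
  linarith [this]


theorem integral_besselK_one_cosh (z : ℝ) (hz : 0 < z) :
    (∫ t in Set.Ioi (0:ℝ), besselK 1 (2 * z * Real.cosh t))
        = (1 / 2) * (besselK (1/2) z) ^ 2 ∧
      (1 / 2) * (besselK (1/2) z) ^ 2 = (π / (4 * z)) * Real.exp (-2 * z) := by
  have hsecond : (1 / 2) * (besselK (1/2) z) ^ 2 = (π / (4 * z)) * Real.exp (-2 * z) := by
    rw [besselK_half hz, mul_pow, Real.sq_sqrt (by positivity : (0:ℝ) ≤ π / (2*z))]
    rw [pow_two, ← Real.exp_add, (show -z + -z = -2 * z by ring)]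
    field_simp
    ring
  refine ⟨?_, hsecond⟩
  have hbK1 : ∀ t : ℝ, besselK 1 (2 * z * Real.cosh t)
      = ∫ s in Set.Ioi (0:ℝ), Real.exp (-(2 * z * Real.cosh t) * Real.cosh s) * Real.cosh s := by
    intro t
    unfold besselK
    simp_rw [one_mul]
  have step1 : (∫ t in Set.Ioi (0:ℝ), besselK 1 (2 * z * Real.cosh t))
      = ∫ t in Set.Ioi (0:ℝ), (Real.cosh t)⁻¹
          * ∫ p in Set.Ioi (0:ℝ), Real.exp (-(2*z) * Real.sqrt (Real.cosh t^2 + p^2)) := by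
    refine setIntegral_congr_fun measurableSet_Ioi fun t _ => ?_
    rw [hbK1 t]
    exact inner_subst hz (Real.cosh_pos t)
  rw [step1, outer_subst hz]
  have h4 := F_plane hz
  rw [F_polar_value hz] at h4
  have hval : (∫ q in Set.Ioi (0:ℝ), (1 + q^2)⁻¹
      * ∫ p in Set.Ioi (0:ℝ), Real.exp (-(2*z) * Real.sqrt (1 + q^2 + p^2)))
        = (π / (4 * z)) * Real.exp (-2 * z) := by
    have he : Real.exp (-(2*z)) = Real.exp (-2 * z) := by ring_nf
    rw [he] at h4
    have hz' : z ≠ 0 := hz.ne'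
    field_simp at h4 ⊢
    linarith
  rw [hval, hsecond]
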